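/- Let 𝔥 be the Lie algebra on ℝ⁷ with structure equations de¹ = 0, de² = 0, de³ = −e³⁷, de⁴ = e⁴⁷, de⁵ = 2 e¹⁴ + e⁵⁷, de⁶ = −2 e²⁴ + e⁶⁷, de⁷ = 0, let φ = e¹²⁷ + e³⁴⁷ + e⁵⁶⁷ + e¹³⁵ − e¹⁴⁶ − e²³⁶ − e²⁴⁵, and let τ = 2 e¹² + 2 e³⁴ − 4 e⁵⁶. Then the diagonal endomorphism D = diag(0, 0, −4, 4, 4, 4, 0) (with respect to e₁,…,e₇) is a derivation of 𝔥, and there exists a derivation D̃ of 𝔥 such that dτ = D̃.φ; i.e., φ is a steady algebraic Laplacian soliton (λ = 0) on 𝔥. -/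
import Mathlib


/-!
Common framework: unbundled exterior forms on ℝ⁷, wedge product, interior product,
Chevalley–Eilenberg differential of a Lie bracket, induced inner products on forms,
derived series, and the Lie algebras / G₂-structures from the paper
"Laplacian flow solitons on non-solvable Lie groups" (Fino–Raffero).
-/

open scoped BigOperators

namespace G2Solitons

/-- The underlying vector space ℝ⁷. -/
abbrev V7 : Type := Fin 7 → ℝ

/-- Unbundled `k`-forms: real-valued functions of `k` vectors of ℝ⁷. -/
abbrev Form (k : ℕ) : Type := (Fin k → V7) → ℝ

/-- Standard basis of ℝ⁷. -/
def stdB (i : Fin 7) : V7 := fun j => if j = i then 1 else 0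

/-- The basic `k`-form `e^{i₁} ∧ ⋯ ∧ e^{i_k}` (determinant convention, 0-indexed). -/
def eB {k : ℕ} (idx : Fin k → Fin 7) : Form k :=
  fun v => Matrix.det (Matrix.of fun a b : Fin k => v a (idx b))

/-- Wedge product of a `p`-form and a `q`-form (convention
`(α∧β)(v) = (p!q!)⁻¹ ∑_σ sgn σ · α(v∘σ|_{first p}) β(v∘σ|_{last q})`). -/
noncomputable def wedge {p q : ℕ} (α : Form p) (β : Form q) : Form (p + q) := fun v =>
  ((p.factorial * q.factorial : ℕ) : ℝ)⁻¹ *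
    ∑ σ : Equiv.Perm (Fin (p + q)),
      ((Equiv.Perm.sign σ : ℤ) : ℝ) *
        (α (fun i => v (σ (Fin.castAdd q i))) * β (fun j => v (σ (Fin.natAdd p j))))

/-- Interior product of a vector with a `(k+1)`-form. -/
def iprod {k : ℕ} (u : V7) (α : Form (k + 1)) : Form k := fun v => α (Fin.cons u v)

/-- Chevalley–Eilenberg differential of a `(k+1)`-form with respect to a bracket:
`(dα)(x₀,…,x_{k+1}) = ∑_{i<j} (-1)^{i+j} α([xᵢ,xⱼ], x₀,…,x̂ᵢ,…,x̂ⱼ,…,x_{k+1})`. -/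
def dCE {k : ℕ} (br : V7 → V7 → V7) (α : Form (k + 1)) : Form (k + 2) := fun v =>
  ∑ i : Fin (k + 2), ∑ j : Fin (k + 2),
    if (i : ℕ) < (j : ℕ) then
      (-1 : ℝ) ^ ((i : ℕ) + (j : ℕ)) *
        α (Fin.cons (br (v i) (v j)) fun l : Fin k =>
            if (l : ℕ) < (i : ℕ) then v ⟨(l : ℕ), by omega⟩
            else if (l : ℕ) + 1 < (j : ℕ) then v ⟨(l : ℕ) + 1, by omega⟩
            else v ⟨(l : ℕ) + 2, by omega⟩)
    else 0

/-- Inner product on `k`-forms induced by the diagonal metric `g = ∑ᵢ c i (e^i)²`,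
determined by declaring `{(c i₁ ⋯ c i_k)^{-1/2} e^{i₁⋯i_k} : i₁ < ⋯ < i_k}` orthonormal. -/
noncomputable def formInner (c : Fin 7 → ℝ) {k : ℕ} (α β : Form k) : ℝ :=
  ((k.factorial : ℕ) : ℝ)⁻¹ *
    ∑ f : Fin k → Fin 7,
      (∏ i, c (f i))⁻¹ * (α (fun i => stdB (f i)) * β (fun i => stdB (f i)))

/-- Natural action of an endomorphism `D` on a `k`-form:
`(D.α)(v₁,…,v_k) = ∑ᵢ α(v₁,…,D vᵢ,…,v_k)`. -/
def actD {k : ℕ} (D : V7 → V7) (α : Form k) : Form k := fun v =>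
  ∑ i : Fin k, α (Function.update v i (D (v i)))

/-- The Jacobi identity for a bilinear bracket. -/
def Jacobi (br : V7 → V7 → V7) : Prop :=
  ∀ x y z : V7, br (br x y) z + br (br y z) x + br (br z x) y = 0

/-- Unimodularity: `tr (ad x) = 0` for all `x`. -/
def Unimodular (br : V7 → V7 → V7) : Prop :=
  ∀ x : V7, ∑ i : Fin 7, br x (stdB i) i = 0

/-- Derivation property for a map `D`. -/
def IsDeriv (br : V7 → V7 → V7) (D : V7 → V7) : Prop :=
  ∀ x y : V7, D (br x y) = br (D x) y + br x (D y)

/-- Derived series of a bracket. -/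
def derSeries (br : V7 → V7 → V7) : ℕ → Submodule ℝ V7
  | 0 => ⊤
  | n + 1 => Submodule.span ℝ
      {z | ∃ x ∈ derSeries br n, ∃ y ∈ derSeries br n, z = br x y}

/-- Solvability: the derived series terminates at zero. -/
def Solvable (br : V7 → V7 → V7) : Prop := ∃ n, derSeries br n = ⊥

/-- Real cube root (the real root, also for negative arguments). -/
noncomputable def cbrt (x : ℝ) : ℝ :=
  if x < 0 then -((-x) ^ ((1 : ℝ) / 3)) else x ^ ((1 : ℝ) / 3)

/-- The standard volume form `e^{1234567}`. -/
def vol7 : Form 7 := eB ![0, 1, 2, 3, 4, 5, 6]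

end G2Solitons

namespace G2Solitons

noncomputable section

/-- The bracket of the Lie algebra `𝔥` with structure equations
`(0, 0, -e³⁷, e⁴⁷, 2 e¹⁴ + e⁵⁷, -2 e²⁴ + e⁶⁷, 0)`,
via the convention `dα(x,y) = -α([x,y])`. -/
def brH : V7 → V7 → V7 := fun x y =>
  ![0,
    0,
    x 2 * y 6 - x 6 * y 2,
    -(x 3 * y 6 - x 6 * y 3),
    -2 * (x 0 * y 3 - x 3 * y 0) - (x 4 * y 6 - x 6 * y 4),
    2 * (x 1 * y 3 - x 3 * y 1) - (x 5 * y 6 - x 6 * y 5),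
    0]

/-- `φ = e¹²⁷ + e³⁴⁷ + e⁵⁶⁷ + e¹³⁵ - e¹⁴⁶ - e²³⁶ - e²⁴⁵`. -/
def phiH : Form 3 := fun v =>
  eB ![0, 1, 6] v + eB ![2, 3, 6] v + eB ![4, 5, 6] v
    + eB ![0, 2, 4] v - eB ![0, 3, 5] v - eB ![1, 2, 5] v - eB ![1, 3, 4] v

/-- The standard Euclidean metric `g_φ = ∑_{i=1}^{7} (e^i)²`. -/
def gH (u v : V7) : ℝ := ∑ i : Fin 7, u i * v i

/-- `τ = 2 e¹² + 2 e³⁴ - 4 e⁵⁶`. -/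
def tauH : Form 2 := fun v =>
  2 * eB ![0, 1] v + 2 * eB ![2, 3] v - 4 * eB ![4, 5] v

/-- `D = diag(0, 0, -4, 4, 4, 4, 0)`. -/
def DH : V7 → V7 := fun x i => (![0, 0, -4, 4, 4, 4, 0] : Fin 7 → ℝ) i * x i

end

end G2Solitons


namespace G2Solitons

/-- `DH` as a linear map. -/
noncomputable def DHlin : V7 →ₗ[ℝ] V7 where
  toFun := DH
  map_add' x y := by funext i; simp [DH]; ring
  map_smul' c x := by funext i; simp [DH]; ring

lemma DHlin_coe : ⇑DHlin = DH := rfl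

lemma dv0 : (![0, 0, -4, 4, 4, 4, 0] : Fin 7 → ℝ) 0 = 0 := rfl
lemma dv1 : (![0, 0, -4, 4, 4, 4, 0] : Fin 7 → ℝ) 1 = 0 := rfl
lemma dv2 : (![0, 0, -4, 4, 4, 4, 0] : Fin 7 → ℝ) 2 = -4 := rfl
lemma dv3 : (![0, 0, -4, 4, 4, 4, 0] : Fin 7 → ℝ) 3 = 4 := rfl
lemma dv4 : (![0, 0, -4, 4, 4, 4, 0] : Fin 7 → ℝ) 4 = 4 := rfl
lemma dv5 : (![0, 0, -4, 4, 4, 4, 0] : Fin 7 → ℝ) 5 = 4 := rfl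
lemma dv6 : (![0, 0, -4, 4, 4, 4, 0] : Fin 7 → ℝ) 6 = 0 := rfl

lemma mv5 (a0 a1 a2 a3 a4 a5 a6 : ℝ) :
    (![a0, a1, a2, a3, a4, a5, a6] : Fin 7 → ℝ) 5 = a5 := rfl
lemma mv6 (a0 a1 a2 a3 a4 a5 a6 : ℝ) :
    (![a0, a1, a2, a3, a4, a5, a6] : Fin 7 → ℝ) 6 = a6 := rfl

lemma DH_deriv : IsDeriv brH DH := by
  intro x y
  funext i
  fin_cases i <;>
    simp [brH, DH, dv0, dv1, dv2, dv3, dv4, dv5, dv6, mv5, mv6, Matrix.cons_val_zero,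
      Matrix.cons_val_one, Matrix.cons_val_succ] <;> ring

end G2Solitons

namespace G2Solitons


lemma cv7_0 {α : Type*} (a0 a1 a2 a3 a4 a5 a6 : α) : ![a0,a1,a2,a3,a4,a5,a6] 0 = a0 := rfl
lemma cv7_1 {α : Type*} (a0 a1 a2 a3 a4 a5 a6 : α) : ![a0,a1,a2,a3,a4,a5,a6] 1 = a1 := rfl
lemma cv7_2 {α : Type*} (a0 a1 a2 a3 a4 a5 a6 : α) : ![a0,a1,a2,a3,a4,a5,a6] 2 = a2 := rfl
lemma cv7_3 {α : Type*} (a0 a1 a2 a3 a4 a5 a6 : α) : ![a0,a1,a2,a3,a4,a5,a6] 3 = a3 := rfl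
lemma cv7_4 {α : Type*} (a0 a1 a2 a3 a4 a5 a6 : α) : ![a0,a1,a2,a3,a4,a5,a6] 4 = a4 := rfl
lemma cv7_5 {α : Type*} (a0 a1 a2 a3 a4 a5 a6 : α) : ![a0,a1,a2,a3,a4,a5,a6] 5 = a5 := rfl
lemma cv7_6 {α : Type*} (a0 a1 a2 a3 a4 a5 a6 : α) : ![a0,a1,a2,a3,a4,a5,a6] 6 = a6 := rfl
lemma cv3_0 {α : Type*} (a0 a1 a2 : α) : ![a0,a1,a2] 0 = a0 := rfl
lemma cv3_1 {α : Type*} (a0 a1 a2 : α) : ![a0,a1,a2] 1 = a1 := rfl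
lemma cv3_2 {α : Type*} (a0 a1 a2 : α) : ![a0,a1,a2] 2 = a2 := rfl
lemma cv2_0 {α : Type*} (a0 a1 : α) : ![a0,a1] 0 = a0 := rfl
lemma cv2_1 {α : Type*} (a0 a1 : α) : ![a0,a1] 1 = a1 := rfl

lemma consPair (a : V7) (f : Fin 1 → V7) : Fin.cons a f = ![a, f 0] := by
  funext i; fin_cases i <;> rfl

lemma actD_three (D : V7 → V7) (α : Form 3) (w : Fin 3 → V7) :
    actD D α w = α ![D (w 0), w 1, w 2] + α ![w 0, D (w 1), w 2] + α ![w 0, w 1, D (w 2)] := by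
  have h0 : Function.update w 0 (D (w 0)) = ![D (w 0), w 1, w 2] := by
    funext i; fin_cases i <;> simp
  have h1 : Function.update w 1 (D (w 1)) = ![w 0, D (w 1), w 2] := by
    funext i; fin_cases i <;> simp
  have h2 : Function.update w 2 (D (w 2)) = ![w 0, w 1, D (w 2)] := by
    funext i; fin_cases i <;> simp
  simp [actD, Fin.sum_univ_three, h0, h1, h2]

lemma dCE_two (br : V7 → V7 → V7) (α : Form 2) (w : Fin 3 → V7) :
    dCE br α w = -α ![br (w 0) (w 1), w 2] + α ![br (w 0) (w 2), w 1]
      - α ![br (w 1) (w 2), w 0] := by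
  simp only [dCE]
  rw [Fin.sum_univ_three]
  rw [Fin.sum_univ_three, Fin.sum_univ_three, Fin.sum_univ_three]
  norm_num [consPair, show (⟨2, by norm_num⟩ : Fin 3) = 2 from rfl]
  ring

set_option maxHeartbeats 1000000 in
/-- `D = diag(0,0,-4,4,4,4,0)` is a derivation of `𝔥`, and
`dτ = D̃.φ` for some derivation `D̃`, i.e. `φ` is a steady algebraic Laplacian soliton. -/
theorem steady_soliton_H :
    IsDeriv brH DH ∧
    ∃ D : V7 →ₗ[ℝ] V7, IsDeriv brH (⇑D) ∧
      ∀ w, dCE brH tauH w = actD (⇑D) phiH w := by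
  refine ⟨DH_deriv, DHlin, by rw [DHlin_coe]; exact DH_deriv, ?_⟩
  intro w
  show dCE brH tauH w = actD DH phiH w
  rw [dCE_two, actD_three]
  simp only [tauH, phiH, eB, brH, DH, Matrix.det_fin_two, Matrix.det_fin_three,
    Matrix.of_apply, cv3_0, cv3_1, cv3_2, cv2_0, cv2_1, cv7_0, cv7_1, cv7_2, cv7_3,
    cv7_4, cv7_5, cv7_6, dv0, dv1, dv2, dv3, dv4, dv5, dv6]
  ring

end G2Solitons
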